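/- Let C₁ and C₂ be disjoint nonempty finite sets (context cues), let F₁ and F₂ be finite sets (features), and let d₁ : F₁ → ℝ and d₂ : F₂ → ℝ be arbitrary functions. Define the context-dependent target y : (C₁ ∪ C₂) × F₁ × F₂ → ℝ by y(c, z₁, z₂) = d₁(z₁) if c ∈ C₁ and y(c, z₁, z₂) = d₂(z₂) if c ∈ C₂. Then there exist functions g₁₂ : (C₁ ∪ C₂) × F₁ → ℝ and g₁₃ : (C₁ ∪ C₂) × F₂ → ℝ such that y(c, z₁, z₂) = g₁₂(c, z₁) + g₁₃(c, z₂) for all c ∈ C₁ ∪ C₂, z₁ ∈ F₁, z₂ ∈ F₂. -/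
import Mathlib

/-- Context dependence with novel stimulus compositions is conjunction-wise additive:
the context-dependent target is a sum of a context–feature-1 function and a
context–feature-2 function. -/
theorem context_dependence_is_additive
    {α : Type*} [DecidableEq α] (C₁ C₂ : Finset α)
    (hne₁ : C₁.Nonempty) (hne₂ : C₂.Nonempty) (hdisj : Disjoint C₁ C₂)
    (F₁ F₂ : Type*) [Fintype F₁] [Fintype F₂]
    (d₁ : F₁ → ℝ) (d₂ : F₂ → ℝ)
    (y : α → F₁ → F₂ → ℝ)
    (hy₁ : ∀ c ∈ C₁, ∀ (z₁ : F₁) (z₂ : F₂), y c z₁ z₂ = d₁ z₁)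
    (hy₂ : ∀ c ∈ C₂, ∀ (z₁ : F₁) (z₂ : F₂), y c z₁ z₂ = d₂ z₂) :
    ∃ (g₁₂ : α → F₁ → ℝ) (g₁₃ : α → F₂ → ℝ),
      ∀ c ∈ C₁ ∪ C₂, ∀ (z₁ : F₁) (z₂ : F₂),
        y c z₁ z₂ = g₁₂ c z₁ + g₁₃ c z₂ := by
  refine ⟨fun c z₁ => if c ∈ C₁ then d₁ z₁ else 0,
          fun c z₂ => if c ∈ C₁ then 0 else d₂ z₂, ?_⟩
  intro c hc z₁ z₂
  rcases Finset.mem_union.mp hc with h | h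
  · simp [h, hy₁ c h z₁ z₂]
  · have h1 : c ∉ C₁ := fun h' => (Finset.disjoint_left.mp hdisj h') h
    simp [h1, hy₂ c h z₁ z₂]
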